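/- Let $A$ be a Noetherian local ring which is either complete or has uncountable residue field. Let $\{\mathfrak{p}_i\}_{i=1}^\infty$ be a countable family of prime ideals of $A$, let $\mathfrak{a}$ be an ideal of $A$, and let $x \in A$. If the coset $x + \mathfrak{a}$ is contained in $\bigcup_{i=1}^\infty \mathfrak{p}_i$, then $x + \mathfrak{a} \subseteq \mathfrak{p}_j$ for some $j$. -/

import Mathlib

open IsLocalRing CategoryTheory

noncomputable section

/-- The depth of a module over a local ring: the supremum of lengths of
regular sequences contained in the maximal ideal. -/
def moduleDepth (R M : Type) [CommRing R] [IsLocalRing R]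
    [AddCommGroup M] [Module R M] : ℕ∞ :=
  sSup {n : ℕ∞ | ∃ rs : List R, (rs.length : ℕ∞) = n ∧
    (∀ r ∈ rs, r ∈ maximalIdeal R) ∧ RingTheory.Sequence.IsRegular M rs}

/-- A maximal Cohen-Macaulay module over a local ring: finitely generated, nonzero,
with depth equal to the Krull dimension of the ring. -/
def IsMCM (R M : Type) [CommRing R] [IsLocalRing R]
    [AddCommGroup M] [Module R M] : Prop :=
  Module.Finite R M ∧ Nontrivial M ∧ (moduleDepth R M : WithBot ℕ∞) = ringKrullDim R

/-- A Cohen-Macaulay local ring. -/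
def IsCMLocalRing (R : Type) [CommRing R] [IsLocalRing R] : Prop :=
  (moduleDepth R R : WithBot ℕ∞) = ringKrullDim R

/-- The Ext group `Ext^n_R(M, N)` as an `R`-module. -/
def ExtMod (R : Type) [CommRing R] (n : ℕ) (M N : Type)
    [AddCommGroup M] [Module R M] [AddCommGroup N] [Module R N] : Type :=
  ((Ext R (ModuleCat R) n).obj (Opposite.op (ModuleCat.of R M))).obj (ModuleCat.of R N)

instance (R : Type) [CommRing R] (n : ℕ) (M N : Type)
    [AddCommGroup M] [Module R M] [AddCommGroup N] [Module R N] :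
    AddCommGroup (ExtMod R n M N) := by
  unfold ExtMod; infer_instance

instance (R : Type) [CommRing R] (n : ℕ) (M N : Type)
    [AddCommGroup M] [Module R M] [AddCommGroup N] [Module R N] :
    Module R (ExtMod R n M N) := by
  unfold ExtMod; infer_instance

/-- An indecomposable module. -/
def IsIndecomposable (R M : Type) [CommRing R] [AddCommGroup M] [Module R M] : Prop :=
  Nontrivial M ∧ ∀ N₁ N₂ : Submodule R M, IsCompl N₁ N₂ → N₁ = ⊥ ∨ N₂ = ⊥

/-- Countable Cohen-Macaulay type: there is a countable set of finitely presented
modules containing, up to isomorphism, all maximal Cohen-Macaulay modules. -/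
def HasCountableCMType (R : Type) [CommRing R] [IsLocalRing R] : Prop :=
  ∃ S : Set (Σ n : ℕ, Submodule R (Fin n → R)), S.Countable ∧
    ∀ (M : Type) [AddCommGroup M] [Module R M], IsMCM R M →
      ∃ s ∈ S, Nonempty (M ≃ₗ[R] ((Fin s.1 → R) ⧸ s.2))

/-- Injective dimension at most `n`, via vanishing of Ext. -/
def HasInjDimLE (R Y : Type) [CommRing R] [AddCommGroup Y] [Module R Y] (n : ℕ) : Prop :=
  ∀ (M : Type) [AddCommGroup M] [Module R M] (i : ℕ), n < i → Subsingleton (ExtMod R i M Y)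

/-- Finite injective dimension. -/
def HasFiniteInjDim (R Y : Type) [CommRing R] [AddCommGroup Y] [Module R Y] : Prop :=
  ∃ n, HasInjDimLE R Y n

/-- A regular local ring: Noetherian local, whose maximal ideal is generated by
`dim R` elements. -/
def IsRegularLocalRing' (A : Type) [CommRing A] : Prop :=
  IsNoetherianRing A ∧ ∃ h : IsLocalRing A, ∃ s : Finset A,
    Ideal.span (s : Set A) = @IsLocalRing.maximalIdeal A _ h ∧
    ((s.card : ℕ∞) : WithBot ℕ∞) = ringKrullDim A

/-- A catenary ring: any two saturated chains of primes with the same endpoints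
have the same length. -/
def IsCatenaryRing (A : Type) [CommRing A] : Prop :=
  ∀ c d : RelSeries {q : PrimeSpectrum A × PrimeSpectrum A | q.1 ⋖ q.2},
    c.head = d.head → c.last = d.last → c.length = d.length

/-- A regular (not necessarily local) Noetherian ring: all localizations at primes
are regular local rings. -/
def IsRegularRing' (A : Type) [CommRing A] : Prop :=
  ∀ p : PrimeSpectrum A, IsRegularLocalRing' (Localization.AtPrime p.asIdeal)

/-- An excellent local ring: Noetherian, universally catenary, J-2 (regular loci of
finite type algebras are open), with geometrically regular formal fibres. -/
def IsExcellentLocalRing (R : Type) [CommRing R] [IsLocalRing R] : Prop :=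
  IsNoetherianRing R ∧
  (∀ n : ℕ, IsCatenaryRing (MvPolynomial (Fin n) R)) ∧
  (∀ (A : Type) [CommRing A] [Algebra R A], Algebra.FiniteType R A →
      IsOpen {p : PrimeSpectrum A | IsRegularLocalRing' (Localization.AtPrime p.asIdeal)}) ∧
  (∀ p : PrimeSpectrum R,
    ∀ (L : Type) [Field L] [Algebra (ResidueField (Localization.AtPrime p.asIdeal)) L],
      FiniteDimensional (ResidueField (Localization.AtPrime p.asIdeal)) L →
      letI : Algebra R L := ((algebraMap (ResidueField (Localization.AtPrime p.asIdeal)) L).comp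
        (algebraMap R (ResidueField (Localization.AtPrime p.asIdeal)))).toAlgebra
      IsRegularRing' (TensorProduct R L (AdicCompletion (maximalIdeal R) R)))

/-- A free resolution of `M` by finitely generated free modules. -/
structure FreeRes (R : Type) [CommRing R] (M : Type) [AddCommGroup M] [Module R M] where
  rank : ℕ → ℕ
  aug : (Fin (rank 0) → R) →ₗ[R] M
  d : (i : ℕ) → ((Fin (rank (i+1)) → R) →ₗ[R] (Fin (rank i) → R))
  aug_surjective : Function.Surjective aug
  exact_zero : LinearMap.range (d 0) = LinearMap.ker aug
  exact_succ : ∀ i, LinearMap.range (d (i+1)) = LinearMap.ker (d i)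

/-- A minimal free resolution over a local ring. -/
structure MinFreeRes (R : Type) [CommRing R] [IsLocalRing R]
    (M : Type) [AddCommGroup M] [Module R M] extends FreeRes R M where
  minimal_aug : LinearMap.ker aug ≤ (maximalIdeal R) • ⊤
  minimal : ∀ i, LinearMap.range (d i) ≤ (maximalIdeal R) • ⊤

/-- `S` is (isomorphic to) the `n`-th syzygy of `M` in the given free resolution;
the `0`-th syzygy is `M` itself, and for `n ≥ 1` it is the image of `d (n-1)`. -/
def FreeRes.IsSyzygy {R : Type} [CommRing R] {M : Type} [AddCommGroup M] [Module R M]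
    (F : FreeRes R M) (n : ℕ) (S : Type) [AddCommGroup S] [Module R S] : Prop :=
  match n with
  | 0 => Nonempty (S ≃ₗ[R] M)
  | k+1 => Nonempty (S ≃ₗ[R] LinearMap.range (F.d k))

/-- A canonical module for a Cohen-Macaulay local ring: a maximal Cohen-Macaulay
module of finite injective dimension whose endomorphism ring is `R`. -/
def HasCanonicalModule (R : Type) [CommRing R] [IsLocalRing R] : Prop :=
  ∃ ω : ModuleCat R, Module.Finite R ω ∧ IsMCM R ω ∧ HasFiniteInjDim R ω ∧
    Nonempty (Module.End R ω ≃ₐ[R] R)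

/-- The height of an ideal: the infimum of dimensions of localizations at primes
containing it. -/
def idealHeight (R : Type) [CommRing R] (J : Ideal R) : WithBot ℕ∞ :=
  sInf {h | ∃ p : PrimeSpectrum R, J ≤ p.asIdeal ∧
    h = ringKrullDim (Localization.AtPrime p.asIdeal)}

end

set_option linter.unnecessarySimpa false

section Aux
variable {A : Type} [CommRing A] [IsNoetherianRing A] [IsLocalRing A]

lemma aux_closure (I : Ideal A) (hI : I ≠ ⊤) (y : A)
    (hy : ∀ k : ℕ, y ∈ I ⊔ (maximalIdeal A) ^ k) : y ∈ I := by
  haveI hnt : Nontrivial (A ⧸ I) := Ideal.Quotient.nontrivial_iff.mpr hI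
  haveI hloc : IsLocalRing (A ⧸ I) :=
    IsLocalRing.of_surjective' (Ideal.Quotient.mk I) Ideal.Quotient.mk_surjective
  have hIm : I ≤ maximalIdeal A := le_maximalIdeal hI
  have hmap : Ideal.map (Ideal.Quotient.mk I) (maximalIdeal A) ≠ ⊤ := by
    intro ht
    have h1 : (1 : A ⧸ I) ∈ Ideal.map (Ideal.Quotient.mk I) (maximalIdeal A) := by
      rw [ht]; exact Submodule.mem_top
    obtain ⟨w, hw, hw1⟩ :=
      (Ideal.mem_map_iff_of_surjective _ Ideal.Quotient.mk_surjective).mp h1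
    have hsub : (1 : A) - w ∈ I := by
      rw [← Ideal.Quotient.eq_zero_iff_mem]
      simp [map_sub, hw1]
    have : (1 : A) ∈ maximalIdeal A := by
      have := add_mem (hIm hsub) hw
      simpa using this
    exact (Ideal.ne_top_iff_one _).mp (maximalIdeal.isMaximal A).ne_top this
  have hle : Ideal.map (Ideal.Quotient.mk I) (maximalIdeal A) ≤ maximalIdeal (A ⧸ I) :=
    le_maximalIdeal hmap
  have hbot : (⨅ k : ℕ, (maximalIdeal (A ⧸ I)) ^ k) = ⊥ :=
    Ideal.iInf_pow_eq_bot_of_isLocalRing _ (maximalIdeal.isMaximal _).ne_top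
  have hmem : Ideal.Quotient.mk I y ∈ (⨅ k : ℕ, (maximalIdeal (A ⧸ I)) ^ k) := by
    rw [Submodule.mem_iInf]
    intro k
    obtain ⟨u, hu, v, hv, huv⟩ := Submodule.mem_sup.mp (hy k)
    have h1 : Ideal.Quotient.mk I y = Ideal.Quotient.mk I v := by
      rw [← huv]
      simp [Ideal.Quotient.eq_zero_iff_mem.mpr hu]
    rw [h1]
    have h2 : Ideal.Quotient.mk I v ∈ Ideal.map (Ideal.Quotient.mk I) ((maximalIdeal A) ^ k) :=
      Ideal.mem_map_of_mem _ hv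
    rw [Ideal.map_pow] at h2
    exact Ideal.pow_right_mono hle k h2
  rw [hbot] at hmem
  exact Ideal.Quotient.eq_zero_iff_mem.mp (Submodule.mem_bot _ |>.mp hmem)

end Aux

lemma aux_uncountable {A : Type} [CommRing A] [IsNoetherianRing A] [IsLocalRing A]
    [Uncountable (ResidueField A)]
    (p : ℕ → Ideal A) (a : Ideal A) (x : A)
    (h : {y : A | ∃ z ∈ a, y = x + z} ⊆ ⋃ i, (p i : Set A)) :
    ∃ j, {y : A | ∃ z ∈ a, y = x + z} ⊆ (p j : Set A) := by
  classical
  obtain ⟨n, v, hv⟩ :=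
    Submodule.fg_iff_exists_fin_generating_family.mp (IsNoetherian.noetherian a)
  have hva : ∀ j, v j ∈ a := fun j => hv ▸ Submodule.subset_span ⟨j, rfl⟩
  set lift : ResidueField A → A := Function.surjInv (IsLocalRing.residue_surjective (R := A))
    with hlift
  have hliftval : ∀ κ, residue A (lift κ) = κ :=
    fun κ => Function.surjInv_eq (IsLocalRing.residue_surjective (R := A)) κ
  have hunit : ∀ κ κ', κ ≠ κ' → IsUnit (lift κ - lift κ') := by
    intro κ κ' hne
    rw [← IsLocalRing.notMem_maximalIdeal]
    intro hmem
    have : residue A (lift κ - lift κ') = 0 := (residue_eq_zero_iff _).mpr hmem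
    rw [map_sub, hliftval, hliftval, sub_eq_zero] at this
    exact hne this
  set w : Fin (n + 1) → A := Fin.cons x v with hw
  set e : A → A := fun t => ∑ j : Fin (n + 1), t ^ (j : ℕ) * w j with he
  have heS : ∀ t, e t ∈ {y : A | ∃ z ∈ a, y = x + z} := by
    intro t
    refine ⟨∑ j : Fin n, t ^ ((j : ℕ) + 1) * v j, ?_, ?_⟩
    · exact Ideal.sum_mem _ fun j _ => a.mul_mem_left _ (hva j)
    · rw [he]
      simp only [Fin.sum_univ_succ, hw, Fin.cons_zero, Fin.cons_succ, pow_zero, one_mul]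
      simp [Fin.val_succ]
  have hchoice : ∀ κ : ResidueField A, ∃ i, e (lift κ) ∈ p i :=
    fun κ => Set.mem_iUnion.mp (h (heS (lift κ)))
  choose g hg using hchoice
  obtain ⟨i, hfib⟩ : ∃ i, (g ⁻¹' {i}).Infinite := by
    by_contra hc
    push_neg at hc
    have huniv : (Set.univ : Set (ResidueField A)) = ⋃ i, g ⁻¹' {i} := by
      ext κ; simp
    have : (Set.univ : Set (ResidueField A)).Countable := by
      rw [huniv]
      exact Set.countable_iUnion fun i => (hc i).countable
    exact (not_countable (α := ResidueField A)) (Set.countable_univ_iff.mp this)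
  obtain ⟨t, hts, htc⟩ := hfib.exists_subset_card_eq (n + 1)
  let eqv : Fin (n + 1) ≃ t := (t.equivFin.trans (finCongr htc)).symm
  let c : Fin (n + 1) → A := fun j => lift ((eqv j : ResidueField A))
  have hcdist : ∀ j j' : Fin (n + 1), j ≠ j' →
      ((eqv j : ResidueField A)) ≠ ((eqv j' : ResidueField A)) := by
    intro j j' hne hEq
    exact hne (eqv.injective (Subtype.ext hEq))
  have hdet : IsUnit (Matrix.vandermonde c).det := by
    rw [Matrix.det_vandermonde]
    refine Finset.prod_induction _ IsUnit (fun _ _ ha hb => ha.mul hb) isUnit_one ?_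
    intro j _
    refine Finset.prod_induction _ IsUnit (fun _ _ ha hb => ha.mul hb) isUnit_one ?_
    intro j' hj'
    exact hunit _ _ (hcdist j' j (Finset.mem_Ioi.mp hj').ne')
  have hmemi : ∀ j, (Matrix.vandermonde c).mulVec w j ∈ p i := by
    intro j
    have h1 : g ((eqv j : ResidueField A)) = i := hts (eqv j).2
    have h2 := hg ((eqv j : ResidueField A))
    rw [h1] at h2
    have h3 : (Matrix.vandermonde c).mulVec w j = e (c j) := by
      simp [Matrix.mulVec, Matrix.vandermonde, dotProduct, he]
    rw [h3]
    exact h2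
  have hInv : Invertible (Matrix.vandermonde c) := Matrix.invertibleOfIsUnitDet _ hdet
  have hwk : ∀ k, w k ∈ p i := by
    intro k
    have hwe : w = (⅟(Matrix.vandermonde c)).mulVec ((Matrix.vandermonde c).mulVec w) := by
      rw [Matrix.mulVec_mulVec, invOf_mul_self, Matrix.one_mulVec]
    rw [congrFun hwe k]
    simp only [Matrix.mulVec, dotProduct]
    exact Ideal.sum_mem _ fun j _ => (p i).mul_mem_left _ (hmemi j)
  refine ⟨i, ?_⟩
  rintro y ⟨z, hz, rfl⟩
  have hx : x ∈ p i := by simpa [hw] using hwk 0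
  have hale : a ≤ p i := by
    rw [← hv, Submodule.span_le]
    rintro _ ⟨j, rfl⟩
    simpa [hw] using hwk j.succ
  exact (p i).add_mem hx (hale hz)

lemma aux_complete {A : Type} [CommRing A] [IsNoetherianRing A] [IsLocalRing A]
    [IsAdicComplete (maximalIdeal A) A]
    (p : ℕ → Ideal A) (hp : ∀ i, (p i).IsPrime) (a : Ideal A) (x : A)
    (h : {y : A | ∃ z ∈ a, y = x + z} ⊆ ⋃ i, (p i : Set A)) :
    ∃ j, {y : A | ∃ z ∈ a, y = x + z} ⊆ (p j : Set A) := by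
  classical
  by_contra hc
  push_neg at hc
  set S := {y : A | ∃ z ∈ a, y = x + z} with hSdef
  have hxS : x ∈ S := ⟨0, zero_mem a, (add_zero x).symm⟩
  have hxm : x ∈ maximalIdeal A := by
    obtain ⟨i, hi⟩ := Set.mem_iUnion.mp (h hxS)
    exact le_maximalIdeal (hp i).ne_top hi
  have haT : a ≠ ⊤ := by
    intro hT
    have h1 : (1 : A) ∈ S := ⟨1 - x, hT ▸ trivial, by ring⟩
    obtain ⟨i, hi⟩ := Set.mem_iUnion.mp (h h1)
    exact (hp i).ne_top ((Ideal.eq_top_iff_one _).mpr hi)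
  have ham : a ≤ maximalIdeal A := le_maximalIdeal haT
  have hax : ∀ i, a ≤ p i → x ∈ p i → False := by
    intro i hale hxp
    refine hc i ?_
    rintro y ⟨z, hz, rfl⟩
    exact (p i).add_mem hxp (hale hz)
  have hnotm : ∀ i, ¬ maximalIdeal A ≤ p i := by
    intro i hle
    exact hax i (ham.trans hle) (hle hxm)
  -- avoidance step
  have avoid : ∀ (i k : ℕ) (y : A), y ∈ S →
      ∃ c, c ∈ a ∧ c ∈ (maximalIdeal A) ^ k ∧ y + c ∉ p i := by
    intro i k y hy
    by_cases hyp : y ∈ p i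
    · have hnale : ¬ a ≤ p i := by
        intro hale
        obtain ⟨z, hz, rfl⟩ := hy
        refine hax i hale ?_
        have := (p i).sub_mem hyp (hale hz)
        simpa using this
      obtain ⟨u, hu, hup⟩ := SetLike.not_le_iff_exists.mp hnale
      have hnmle : ¬ (maximalIdeal A) ^ k ≤ p i := fun hle =>
        hnotm i ((hp i).le_of_pow_le hle)
      obtain ⟨m, hm, hmp⟩ := SetLike.not_le_iff_exists.mp hnmle
      refine ⟨u * m, a.mul_mem_right m hu, Ideal.mul_mem_left _ u hm, fun hmem => ?_⟩
      have hum : u * m ∈ p i := by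
        have := (p i).sub_mem hmem hyp
        simpa using this
      rcases (hp i).mem_or_mem hum with h' | h'
      · exact hup h'
      · exact hmp h'
    · exact ⟨0, zero_mem a, zero_mem _, by simpa using hyp⟩
  -- protection levels
  have protect : ∀ (N : ℕ) (y : A), (∀ i, i ≤ N → y ∉ p i) →
      ∃ k, N ≤ k ∧ ∀ i ≤ N, y ∉ (p i) ⊔ (maximalIdeal A) ^ k := by
    intro N y hy
    have hex : ∀ i, i ≤ N → ∃ k, y ∉ p i ⊔ (maximalIdeal A) ^ k := by
      intro i hi
      by_contra hcontra
      push_neg at hcontra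
      exact hy i hi (aux_closure (p i) (hp i).ne_top y hcontra)
    choose! f hf using hex
    refine ⟨max N ((Finset.range (N + 1)).sup f), le_max_left _ _, ?_⟩
    intro i hi hmem
    apply hf i hi
    have hK : f i ≤ max N ((Finset.range (N + 1)).sup f) :=
      le_trans (Finset.le_sup (by simp [Nat.lt_succ_iff, hi])) (le_max_right _ _)
    exact SetLike.le_def.mp (sup_le_sup_left (Ideal.pow_le_pow_right hK) (p i)) hmem
  -- step of the construction
  have step : ∀ (n : ℕ) (y : A) (k : ℕ), y ∈ S →
      (∀ i ≤ n, y ∉ p i ⊔ (maximalIdeal A) ^ k) →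
      ∃ y' k', y' ∈ S ∧ (∀ i ≤ n + 1, y' ∉ p i ⊔ (maximalIdeal A) ^ k') ∧
        y' - y ∈ (maximalIdeal A) ^ k ∧ k ≤ k' ∧ n + 1 ≤ k' := by
    intro n y k hyS hyk
    obtain ⟨c, hca, hck, hcp⟩ := avoid (n + 1) k y hyS
    have hy'S : y + c ∈ S := by
      obtain ⟨z, hz, rfl⟩ := hyS
      exact ⟨z + c, a.add_mem hz hca, by ring⟩
    have hy'p : ∀ i, i ≤ n + 1 → y + c ∉ p i := by
      intro i hi hmem
      rcases Nat.le_succ_iff.mp hi with hi' | hi'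
      · apply hyk i hi'
        have : y = (y + c) + (-c) := by ring
        rw [this]
        exact Submodule.add_mem _ (Submodule.mem_sup_left hmem)
          (Submodule.mem_sup_right (neg_mem hck))
      · subst hi'
        exact hcp hmem
    obtain ⟨k', hk'N, hk'⟩ := protect (n + 1) (y + c) hy'p
    refine ⟨y + c, max k' k, hy'S, ?_, by simpa using hck, le_max_right _ _,
      le_trans hk'N (le_max_left _ _)⟩
    intro i hi hmem
    exact hk' i hi (SetLike.le_def.mp (sup_le_sup_left (Ideal.pow_le_pow_right (le_max_left _ _)) (p i)) hmem)
  -- base case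
  have base : ∃ y0 k0, y0 ∈ S ∧ ∀ i ≤ 0, y0 ∉ p i ⊔ (maximalIdeal A) ^ k0 := by
    obtain ⟨c, hca, _, hcp⟩ := avoid 0 0 x hxS
    have hy0 : x + c ∈ S := ⟨c, hca, rfl⟩
    have hnp : ∀ i, i ≤ 0 → x + c ∉ p i := by
      intro i hi
      interval_cases i
      exact hcp
    obtain ⟨k0, _, hk0⟩ := protect 0 (x + c) hnp
    exact ⟨x + c, k0, hy0, hk0⟩
  -- the recursive sequence
  let State : ℕ → Type := fun n =>
    {yk : A × ℕ // yk.1 ∈ S ∧ (∀ i ≤ n, yk.1 ∉ p i ⊔ (maximalIdeal A) ^ yk.2) ∧ n ≤ yk.2}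
  have stepEx : ∀ n (s : State n), ∃ s' : State (n + 1),
      s'.1.1 - s.1.1 ∈ (maximalIdeal A) ^ s.1.2 ∧ s.1.2 ≤ s'.1.2 := by
    rintro n ⟨⟨y, k⟩, hS', hI, hk⟩
    obtain ⟨y', k', h1, h2, h3, h4, h5⟩ := step n y k hS' hI
    exact ⟨⟨⟨y', k'⟩, h1, h2, h5⟩, h3, h4⟩
  choose stepF hstep1 hstep2 using stepEx
  obtain ⟨y0, k0, hy0S, hy0⟩ := base
  let s0 : State 0 := ⟨⟨y0, k0⟩, hy0S, hy0, Nat.zero_le _⟩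
  let seq : ∀ n, State n := fun n => Nat.rec s0 stepF n
  have hseq : ∀ n, seq (n + 1) = stepF n (seq n) := fun n => rfl
  set y : ℕ → A := fun n => (seq n).1.1 with hydef
  set k : ℕ → ℕ := fun n => (seq n).1.2 with hkdef
  have hyS' : ∀ n, y n ∈ S := fun n => (seq n).2.1
  have hyI : ∀ n, ∀ i ≤ n, y n ∉ p i ⊔ (maximalIdeal A) ^ (k n) := fun n => (seq n).2.2.1
  have hkn : ∀ n, n ≤ k n := fun n => (seq n).2.2.2
  have hdiff : ∀ n, y (n + 1) - y n ∈ (maximalIdeal A) ^ (k n) := fun n => hstep1 n (seq n)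
  have hkmono : Monotone k := monotone_nat_of_le_succ (fun n => hstep2 n (seq n))
  have hdiff2 : ∀ m n, m ≤ n → y n - y m ∈ (maximalIdeal A) ^ (k m) := by
    intro m n hmn
    induction n, hmn using Nat.le_induction with
    | base => simpa using zero_mem ((maximalIdeal A) ^ (k m))
    | succ n hmn ih =>
      have h1 : (maximalIdeal A) ^ (k n) ≤ (maximalIdeal A) ^ (k m) :=
        Ideal.pow_le_pow_right (hkmono hmn)
      have h2 : y (n + 1) - y m = (y (n + 1) - y n) + (y n - y m) := by ring
      rw [h2]
      exact add_mem (h1 (hdiff n)) ih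
  have hprec : ∀ {m n : ℕ}, m ≤ n →
      y m ≡ y n [SMOD ((maximalIdeal A) ^ m • ⊤ : Submodule A A)] := by
    intro m n hmn
    rw [SModEq.sub_mem, smul_eq_mul, Ideal.mul_top]
    have hle : (maximalIdeal A) ^ (k m) ≤ (maximalIdeal A) ^ m :=
      Ideal.pow_le_pow_right (hkn m)
    have := hle (hdiff2 m n hmn)
    simpa [neg_sub] using neg_mem this
  obtain ⟨L, hL⟩ := (IsAdicComplete.toIsPrecomplete (I := maximalIdeal A) (M := A)).prec hprec
  have hLsub : ∀ n, L - y n ∈ (maximalIdeal A) ^ n := by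
    intro n
    have := hL n
    rw [SModEq.sub_mem, smul_eq_mul, Ideal.mul_top] at this
    simpa [neg_sub] using neg_mem this
  have hLS : L ∈ S := by
    have hall : ∀ n : ℕ, L - x ∈ a ⊔ (maximalIdeal A) ^ n := by
      intro n
      obtain ⟨z, hz, hyn⟩ := hyS' n
      have heq : L - x = (L - y n) + z := by rw [hyn]; ring
      rw [heq]
      exact Submodule.add_mem _ (Submodule.mem_sup_right (hLsub n)) (Submodule.mem_sup_left hz)
    exact ⟨L - x, aux_closure a haT _ hall, by ring⟩
  obtain ⟨i, hi⟩ := Set.mem_iUnion.mp (h hLS)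
  apply hyI i i le_rfl
  have h1 : L - y i ∈ (maximalIdeal A) ^ (k i) := by
    have ha1 := hdiff2 i (k i) (hkn i)
    have ha2 := hLsub (k i)
    have heq : L - y i = (L - y (k i)) + (y (k i) - y i) := by ring
    rw [heq]
    exact add_mem ha2 ha1
  have heq : y i = L - (L - y i) := by ring
  rw [heq]
  exact Submodule.sub_mem _ (Submodule.mem_sup_left hi) (Submodule.mem_sup_right h1)


/-- Countable prime avoidance (Burch). -/
theorem countable_prime_avoidance (A : Type) [CommRing A] [IsNoetherianRing A] [IsLocalRing A]
    (hA : IsAdicComplete (maximalIdeal A) A ∨ Uncountable (ResidueField A))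
    (p : ℕ → Ideal A) (hp : ∀ i, (p i).IsPrime) (a : Ideal A) (x : A)
    (h : {y : A | ∃ z ∈ a, y = x + z} ⊆ ⋃ i, (p i : Set A)) :
    ∃ j, {y : A | ∃ z ∈ a, y = x + z} ⊆ (p j : Set A) := by
  rcases hA with hC | hU
  · haveI := hC
    exact aux_complete p hp a x h
  · haveI := hU
    exact aux_uncountable p a x h
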